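/- arXiv:2112.12963 — 2 statements merged into one kernel-verified Lean document; each statement's English description precedes it below -/
import Mathlib

section
/- Consider MHRG(1,n) for n ∈ ℕ. Then T(Y_{1,n}) = F(Y_{1,n}) if n is odd, and T(Y_{1,n}) = F(Y_{1,n}) ∖ {(n/2)} if n is even. Moreover, for 0 ≤ l ≤ n with (l) ∈ T(Y_{1,n}), the Grundy value is G((l)) = l if n is odd; if n is even, G((l)) = l for l < n/2 and G((l)) = l−1 for l > n/2. In particular, G((n)) = n if n is odd and G((n)) = n−1 if n is even. -/
open Finset

/-- The rectangular Young diagram `Y_{m,n}` (boxes are 1-based pairs `(i,j)`). -/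
def rect (m n : ℕ) : Finset (ℕ × ℕ) := Finset.Icc 1 m ×ˢ Finset.Icc 1 n

/-- `Y` is a Young diagram: a finite set of 1-based boxes, downward closed. -/
def IsYD (Y : Finset (ℕ × ℕ)) : Prop :=
  (∀ p ∈ Y, 1 ≤ p.1 ∧ 1 ≤ p.2) ∧
  (∀ p ∈ Y, ∀ q : ℕ × ℕ, 1 ≤ q.1 → 1 ≤ q.2 → q.1 ≤ p.1 → q.2 ≤ p.2 → q ∈ Y)

/-- `d_k(Y)`: the number of boxes of `Y` on the `k`-th diagonal `j - i = k`. -/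
def dk (Y : Finset (ℕ × ℕ)) (k : ℤ) : ℤ :=
  ((Y.filter fun p => (p.2 : ℤ) - (p.1 : ℤ) = k).card : ℤ)

/-- The set `D_{m,n}` of diagonal sequences: non-negative, vanishing outside
`(-m, n)`, and satisfying the adjacency condition. -/
def Dseq (m n : ℕ) (a : ℤ → ℤ) : Prop :=
  (∀ k : ℤ, 0 ≤ a k) ∧
  (∀ k : ℤ, k ≤ -(m : ℤ) → a k = 0) ∧
  (∀ k : ℤ, (n : ℤ) ≤ k → a k = 0) ∧
  (∀ i : ℤ, -(m : ℤ) < i → i ≤ 0 → a (i - 1) ≤ a i ∧ a i ≤ a (i - 1) + 1) ∧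
  (∀ i : ℤ, 0 < i → i ≤ (n : ℤ) → a i ≤ a (i - 1) ∧ a (i - 1) ≤ a i + 1)

/-- `a_{[l,r]}`: subtract `1` from the components indexed by `l ≤ k ≤ r`. -/
def cut (a : ℤ → ℤ) (l r : ℤ) : ℤ → ℤ := fun k => if l ≤ k ∧ k ≤ r then a k - 1 else a k

/-- The pair `(x,y)` sitting at positions `(k-1,k)` satisfies the adjacency condition. -/
def adjPair (k x y : ℤ) : Prop := if k ≤ 0 then x ≤ y ∧ y ≤ x + 1 else y ≤ x ∧ x ≤ y + 1

/-- `(a_{k-1}, a_k)` is a left bulge, `a_{k-1} ↘ a_k`. -/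
def leftBulge (a : ℤ → ℤ) (k : ℤ) : Prop :=
  adjPair k (a (k - 1)) (a k) ∧ adjPair k (a (k - 1) - 1) (a k)

/-- `(a_{k-1}, a_k)` is a right bulge, `a_{k-1} ↗ a_k`. -/
def rightBulge (a : ℤ → ℤ) (k : ℤ) : Prop :=
  adjPair k (a (k - 1)) (a k) ∧ adjPair k (a (k - 1)) (a k - 1)

/-- The map `E` duplicating the `c`-th component of a sequence. -/
def Emap (c : ℤ) (a : ℤ → ℤ) : ℤ → ℤ := fun k => if k ≤ c then a k else a (k - 1)

def el (c k : ℤ) : ℤ := if k ≤ c then k else k + 1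

def er (c k : ℤ) : ℤ := if k < c then k else k + 1

/-- The unimodal numbering `α_{m,n}(i,j) = min (j-i+m) (i-j+n)`. -/
def unimodal (m n : ℕ) (p : ℕ × ℕ) : ℤ :=
  min ((p.2 : ℤ) - (p.1 : ℤ) + m) ((p.1 : ℤ) - (p.2 : ℤ) + n)

/-- `A(X)`: the multiset of unimodal numbers of the boxes of `X`. -/
def Amul (m n : ℕ) (X : Finset (ℕ × ℕ)) : Multiset ℤ := X.val.map (unimodal m n)

/-- The hook of the box `(i,j)` in `Y`. -/
def hook (Y : Finset (ℕ × ℕ)) (i j : ℕ) : Finset (ℕ × ℕ) :=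
  Y.filter fun p => (p.1 = i ∧ j ≤ p.2) ∨ (p.2 = j ∧ i ≤ p.1)

/-- After removing the hook of `(i,j)`, boxes strictly south-east of `(i,j)` move
up-left by one step. -/
def shiftBox (i j : ℕ) (p : ℕ × ℕ) : ℕ × ℕ :=
  if i < p.1 ∧ j < p.2 then (p.1 - 1, p.2 - 1) else p

/-- The Young diagram `Y ∖ h_Y(i,j)` obtained by removing the hook of `(i,j)`. -/
def removeHook (Y : Finset (ℕ × ℕ)) (i j : ℕ) : Finset (ℕ × ℕ) :=
  (Y \ hook Y i j).image (shiftBox i j)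

/-- One move of MHRG(m,n): remove a hook; if the resulting diagram has a hook with
the same multiset of unimodal numbers, one such hook must also be removed
(this second removal happens at most once). -/
def Move (m n : ℕ) (Y Y' : Finset (ℕ × ℕ)) : Prop :=
  ∃ i j : ℕ, (i, j) ∈ Y ∧
    ((Y' = removeHook Y i j ∧
        ¬∃ i' j' : ℕ, (i', j') ∈ removeHook Y i j ∧
          Amul m n (hook (removeHook Y i j) i' j') = Amul m n (hook Y i j)) ∨
      (∃ i' j' : ℕ, (i', j') ∈ removeHook Y i j ∧
        Amul m n (hook (removeHook Y i j) i' j') = Amul m n (hook Y i j) ∧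
        Y' = removeHook (removeHook Y i j) i' j'))

/-- `T(Y_{m,n})`: the positions of MHRG(m,n) reachable from the starting position. -/
def Reach (m n : ℕ) (Y : Finset (ℕ × ℕ)) : Prop :=
  Relation.ReflTransGen (Move m n) (rect m n) Y

/-- `O(Y)`: the set of options of a position `Y` in MHRG(m,n). -/
def Opt (m n : ℕ) (Y : Finset (ℕ × ℕ)) : Set (Finset (ℕ × ℕ)) := {Y' | Move m n Y Y'}

lemma card_removeHook_lt (Y : Finset (ℕ × ℕ)) (i j : ℕ) (h : (i, j) ∈ Y) :
    (removeHook Y i j).card < Y.card := by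
  have hsub : hook Y i j ⊆ Y := Finset.filter_subset _ _
  have hmem : (i, j) ∈ hook Y i j :=
    Finset.mem_filter.mpr ⟨h, Or.inl ⟨rfl, le_rfl⟩⟩
  have h1 : (removeHook Y i j).card ≤ (Y \ hook Y i j).card := Finset.card_image_le
  have h2 : (Y \ hook Y i j).card = Y.card - (hook Y i j).card := by
    rw [Finset.card_sdiff, Finset.inter_eq_left.mpr hsub]
  have h3 : 0 < (hook Y i j).card := Finset.card_pos.mpr ⟨_, hmem⟩
  have h4 : (hook Y i j).card ≤ Y.card := Finset.card_le_card hsub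
  omega

lemma move_card_lt {m n : ℕ} {Y Y' : Finset (ℕ × ℕ)} (h : Move m n Y Y') :
    Y'.card < Y.card := by
  obtain ⟨i, j, hij, hc⟩ := h
  rcases hc with ⟨rfl, -⟩ | ⟨i', j', hij', -, rfl⟩
  · exact card_removeHook_lt Y i j hij
  · exact (card_removeHook_lt _ i' j' hij').trans (card_removeHook_lt Y i j hij)

/-- The minimal excludant. -/
noncomputable def mex (s : Set ℕ) : ℕ := sInf {k | k ∉ s}

/-- The Grundy value of a position of MHRG(m,n). -/
noncomputable def grundy (m n : ℕ) (Y : Finset (ℕ × ℕ)) : ℕ :=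
  mex {g : ℕ | ∃ Y', ∃ _ : Move m n Y Y', grundy m n Y' = g}
termination_by Y.card
decreasing_by exact move_card_lt (by assumption)

/-- The two-row Young diagram `(λ₁, λ₂)`. -/
def tworow (a b : ℕ) : Finset (ℕ × ℕ) :=
  ({1} : Finset ℕ) ×ˢ Finset.Icc 1 a ∪ ({2} : Finset ℕ) ×ˢ Finset.Icc 1 b

/-- `S` is a shifted Young diagram: rows are intervals `[i, λ_i]` with `λ` strictly
decreasing. -/
def IsShifted (S : Finset (ℕ × ℕ)) : Prop :=
  (∀ p ∈ S, 1 ≤ p.1 ∧ p.1 ≤ p.2) ∧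
  (∀ p ∈ S, ∀ j' : ℕ, p.1 ≤ j' → j' ≤ p.2 → (p.1, j') ∈ S) ∧
  (∀ p ∈ S, 2 ≤ p.1 → (p.1 - 1, p.2 + 1) ∈ S)

/-- The shifted Young diagram of a (strictly decreasing, positive) list of row lengths. -/
def shiftedOf (l : List ℕ) : Finset (ℕ × ℕ) :=
  (Finset.range l.length).biUnion fun i =>
    ({i + 1} : Finset ℕ) ×ˢ Finset.Icc (i + 1) (l.getD i 0)

/-- The staircase `S_n = (n, n-1, …, 1)`. -/
def staircase (n : ℕ) : List ℕ := (List.range n).map fun i => n - i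

/-- The shifted hook of the box `(i,j)` in `S` (box, arm, leg and tail). -/
def shook (S : Finset (ℕ × ℕ)) (i j : ℕ) : Finset (ℕ × ℕ) :=
  S.filter fun p => (p.1 = i ∧ j ≤ p.2) ∨ (p.2 = j ∧ i ≤ p.1) ∨ (p.1 = j + 1 ∧ j < p.2)

/-- The shifting of boxes performed after removing the shifted hook of `(i,j)`. -/
def sShiftBox (i j : ℕ) (p : ℕ × ℕ) : ℕ × ℕ :=
  if i < p.1 ∧ p.1 < j + 1 ∧ j < p.2 then (p.1 - 1, p.2 - 1)
  else if j + 1 < p.1 then (p.1 - 2, p.2 - 2)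
  else p

/-- The shifted Young diagram obtained by removing the shifted hook of `(i,j)`. -/
def sRemoveHook (S : Finset (ℕ × ℕ)) (i j : ℕ) : Finset (ℕ × ℕ) :=
  (S \ shook S i j).image (sShiftBox i j)

/-- One move of HRG on shifted Young diagrams: remove one hook. -/
def SMove (S S' : Finset (ℕ × ℕ)) : Prop :=
  ∃ i j : ℕ, (i, j) ∈ S ∧ S' = sRemoveHook S i j

lemma card_sRemoveHook_lt (S : Finset (ℕ × ℕ)) (i j : ℕ) (h : (i, j) ∈ S) :
    (sRemoveHook S i j).card < S.card := by
  have hsub : shook S i j ⊆ S := Finset.filter_subset _ _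
  have hmem : (i, j) ∈ shook S i j :=
    Finset.mem_filter.mpr ⟨h, Or.inl ⟨rfl, le_rfl⟩⟩
  have h1 : (sRemoveHook S i j).card ≤ (S \ shook S i j).card := Finset.card_image_le
  have h2 : (S \ shook S i j).card = S.card - (shook S i j).card := by
    rw [Finset.card_sdiff, Finset.inter_eq_left.mpr hsub]
  have h3 : 0 < (shook S i j).card := Finset.card_pos.mpr ⟨_, hmem⟩
  have h4 : (shook S i j).card ≤ S.card := Finset.card_le_card hsub
  omega

lemma smove_card_lt {S S' : Finset (ℕ × ℕ)} (h : SMove S S') : S'.card < S.card := by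
  obtain ⟨i, j, hij, rfl⟩ := h
  exact card_sRemoveHook_lt S i j hij

/-- The Grundy value of a position of HRG on shifted Young diagrams. -/
noncomputable def sgrundy (S : Finset (ℕ × ℕ)) : ℕ :=
  mex {g : ℕ | ∃ S', ∃ _ : SMove S S', sgrundy S' = g}
termination_by S.card
decreasing_by exact smove_card_lt (by assumption)

/-- `OH(Y)` for a two-row diagram `Y = (λ₁,λ₂)`: the results of single hook removals. -/
def OH (l1 l2 : ℕ) : Set (Finset (ℕ × ℕ)) :=
  {Y | ∃ a : ℕ, l2 ≤ a ∧ a < l1 ∧ Y = tworow a l2} ∪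
  {Y | ∃ b : ℕ, b < l2 ∧ Y = tworow l1 b} ∪
  {Y | ∃ a : ℕ, a < l2 ∧ Y = tworow (l2 - 1) a}


lemma mem_rect_one {l : ℕ} {p : ℕ × ℕ} : p ∈ rect 1 l ↔ p.1 = 1 ∧ 1 ≤ p.2 ∧ p.2 ≤ l := by
  rw [rect, Finset.mem_product, Finset.mem_Icc, Finset.mem_Icc]
  omega

lemma card_rect_one (l : ℕ) : (rect 1 l).card = l := by
  simp [rect]

lemma rect_one_inj {a b : ℕ} (h : rect 1 a = rect 1 b) : a = b := by
  have := congrArg Finset.card h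
  simpa [card_rect_one] using this

lemma mex_Iio (t : ℕ) : mex (Set.Iio t) = t := by
  unfold mex
  apply le_antisymm
  · exact Nat.sInf_le (by simp)
  · exact le_csInf ⟨t, by simp⟩ (fun b hb => by simpa using hb)
lemma hook_rect {l j : ℕ} (h1 : 1 ≤ j) (h2 : j ≤ l) :
    hook (rect 1 l) 1 j = (Finset.Icc j l).map ⟨fun t => (1, t), by intro a b h; simpa using h⟩ := by
  ext p
  simp only [hook, Finset.mem_filter, mem_rect_one, Finset.mem_map, Finset.mem_Icc,
    Function.Embedding.coeFn_mk]
  constructor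
  · rintro ⟨⟨hp1, hp2, hp3⟩, h⟩
    exact ⟨p.2, by omega, by rw [← hp1]; rfl⟩
  · rintro ⟨t, ht, rfl⟩
    exact ⟨⟨rfl, by show 1 ≤ t; omega, by show t ≤ l; omega⟩, Or.inl ⟨rfl, by show j ≤ t; omega⟩⟩

lemma removeHook_rect {l j : ℕ} (h1 : 1 ≤ j) (h2 : j ≤ l) :
    removeHook (rect 1 l) 1 j = rect 1 (j - 1) := by
  ext p
  simp only [removeHook, Finset.mem_image, Finset.mem_sdiff, hook_rect h1 h2,
    Finset.mem_map, Finset.mem_Icc, mem_rect_one, Function.Embedding.coeFn_mk]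
  constructor
  · rintro ⟨q, ⟨⟨hq1, hq2, hq3⟩, hq4⟩, rfl⟩
    have hq5 : q.2 < j := by
      by_contra h
      exact hq4 ⟨q.2, by omega, by rw [← hq1]; rfl⟩
    simp only [shiftBox, hq1]
    rw [if_neg (by omega)]
    exact ⟨hq1, by omega, by omega⟩
  · rintro ⟨hp1, hp2, hp3⟩
    refine ⟨p, ⟨⟨hp1, by omega, by omega⟩, ?_⟩, ?_⟩
    · rintro ⟨t, ht, hte⟩
      have : p.2 = t := congrArg Prod.snd hte.symm
      omega
    · simp only [shiftBox, hp1]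
      rw [if_neg (by omega)]
def uf (n : ℕ) (t : ℕ) : ℤ := min (t : ℤ) ((n : ℤ) + 1 - t)

lemma Amul_hook_rect {n l j : ℕ} (h1 : 1 ≤ j) (h2 : j ≤ l) :
    Amul 1 n (hook (rect 1 l) 1 j) = (Finset.Icc j l).val.map (uf n) := by
  rw [Amul, hook_rect h1 h2, Finset.map_val, Multiset.map_map]
  apply Multiset.map_congr rfl
  intro t _
  simp only [Function.comp, Function.Embedding.coeFn_mk, unimodal, uf]
  congr 1 <;> simp only [show ∀ s : ℕ, ((⟨fun t => (1, t), by intro a b h; simpa using h⟩ : ℕ ↪ ℕ × ℕ) s) = (1, s) from fun _ => rfl] <;> push_cast <;> ring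

lemma uf_mirror {n t : ℕ} (h1 : 1 ≤ t) (h2 : t ≤ n) : uf n (n + 1 - t) = uf n t := by
  unfold uf
  have : ((n + 1 - t : ℕ) : ℤ) = (n : ℤ) + 1 - t := by omega
  rw [this]
  omega

lemma Icc_image_mirror {n a b : ℕ} (h1 : 1 ≤ a) (h2 : b ≤ n) :
    (Finset.Icc a b).image (fun t => n + 1 - t) = Finset.Icc (n + 1 - b) (n + 1 - a) := by
  ext x
  simp only [Finset.mem_image, Finset.mem_Icc]
  constructor
  · rintro ⟨t, ht, rfl⟩; omega
  · intro hx; exact ⟨n + 1 - x, by omega, by omega⟩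

lemma mirror_map {n a b : ℕ} (h1 : 1 ≤ a) (h2 : b ≤ n) :
    (Finset.Icc a b).val.map (uf n) = (Finset.Icc (n + 1 - b) (n + 1 - a)).val.map (uf n) := by
  rw [← Icc_image_mirror h1 h2,
    Finset.image_val_of_injOn (by
      intro x hx y hy h
      simp only [Finset.coe_Icc, Set.mem_Icc] at hx hy
      dsimp at h
      omega),
    Multiset.map_map]
  apply Multiset.map_congr rfl
  intro t ht
  have ht' : t ∈ Finset.Icc a b := ht
  simp only [Finset.mem_Icc] at ht'
  simp only [Function.comp, uf]
  have : ((n + 1 - t : ℕ) : ℤ) = (n : ℤ) + 1 - t := by omega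
  rw [this]
  omega
lemma min_mem_map {n a b : ℕ} (ha : 1 ≤ a) (hab : a ≤ b) (hb : b ≤ n) :
    min (a : ℤ) ((n : ℤ) + 1 - b) ∈ (Finset.Icc a b).val.map (uf n) := by
  rcases le_total (a : ℤ) ((n : ℤ) + 1 - b) with h | h
  · exact Multiset.mem_map.mpr ⟨a, Finset.mem_Icc.mpr ⟨le_rfl, hab⟩, by unfold uf; omega⟩
  · exact Multiset.mem_map.mpr ⟨b, Finset.mem_Icc.mpr ⟨hab, le_rfl⟩, by unfold uf; omega⟩

lemma min_le_map {n a b : ℕ} {y : ℤ} (hy : y ∈ (Finset.Icc a b).val.map (uf n)) :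
    min (a : ℤ) ((n : ℤ) + 1 - b) ≤ y := by
  obtain ⟨t, ht, rfl⟩ := Multiset.mem_map.mp hy
  have ht' : t ∈ Finset.Icc a b := ht
  rw [Finset.mem_Icc] at ht'
  unfold uf
  omega

lemma map_eq_endpoints {n a b c d : ℕ} (ha : 1 ≤ a) (hab : a ≤ b) (hb : b ≤ n)
    (hc : 1 ≤ c) (hcd : c ≤ d) (hd : d ≤ n)
    (h : (Finset.Icc a b).val.map (uf n) = (Finset.Icc c d).val.map (uf n)) :
    (a = c ∧ b = d) ∨ (a = n + 1 - d ∧ b = n + 1 - c) := by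
  have hcard : b + 1 - a = d + 1 - c := by
    have := congrArg Multiset.card h
    simpa [Nat.card_Icc] using this
  have h1 : min (c : ℤ) ((n : ℤ) + 1 - d) ≤ min (a : ℤ) ((n : ℤ) + 1 - b) :=
    min_le_map (h ▸ min_mem_map ha hab hb)
  have h2 : min (a : ℤ) ((n : ℤ) + 1 - b) ≤ min (c : ℤ) ((n : ℤ) + 1 - d) :=
    min_le_map (h.symm ▸ min_mem_map hc hcd hd)
  omega
lemma trig_mem {n l j : ℕ} (hl : l ≤ n) (hj : 1 ≤ j) (hjl : j ≤ l) (htr : 2 * j = n + 2) :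
    (1, n + 1 - l) ∈ rect 1 (j - 1) ∧
      Amul 1 n (hook (rect 1 (j - 1)) 1 (n + 1 - l)) = Amul 1 n (hook (rect 1 l) 1 j) := by
  have hm : (1, n + 1 - l) ∈ rect 1 (j - 1) := mem_rect_one.mpr ⟨rfl, by omega, by omega⟩
  refine ⟨hm, ?_⟩
  have he : j - 1 = n + 1 - j := by omega
  rw [Amul_hook_rect (by omega) (by omega : n + 1 - l ≤ j - 1), Amul_hook_rect hj hjl,
    mirror_map hj hl, he]

lemma trig_unique {n l j i' j' : ℕ} (hl : l ≤ n) (hj : 1 ≤ j) (hjl : j ≤ l)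
    (hmem : (i', j') ∈ rect 1 (j - 1))
    (heq : Amul 1 n (hook (rect 1 (j - 1)) i' j') = Amul 1 n (hook (rect 1 l) 1 j)) :
    i' = 1 ∧ j' = n + 1 - l ∧ 2 * j = n + 2 := by
  obtain ⟨hi1, hj1, hj2⟩ := mem_rect_one.mp hmem
  subst hi1
  rw [Amul_hook_rect hj1 hj2, Amul_hook_rect hj hjl] at heq
  rcases map_eq_endpoints hj1 hj2 (by omega) hj hjl hl heq with ⟨h1, h2⟩ | ⟨h1, h2⟩ <;>
    refine ⟨rfl, by omega, by omega⟩

lemma move_iff {n l : ℕ} (hl : l ≤ n) (Y' : Finset (ℕ × ℕ)) :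
    Move 1 n (rect 1 l) Y' ↔ ∃ j, 1 ≤ j ∧ j ≤ l ∧
      ((2 * j ≠ n + 2 ∧ Y' = rect 1 (j - 1)) ∨ (2 * j = n + 2 ∧ Y' = rect 1 (n - l))) := by
  constructor
  · rintro ⟨i, j, hij, hc⟩
    obtain ⟨hi1, hj1, hj2⟩ := mem_rect_one.mp hij
    subst hi1
    refine ⟨j, hj1, hj2, ?_⟩
    rcases hc with ⟨rfl, hno⟩ | ⟨i', j', hmem, heq, rfl⟩
    · left
      refine ⟨?_, removeHook_rect hj1 hj2⟩
      intro htr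
      obtain ⟨hm, ha⟩ := trig_mem hl hj1 hj2 htr
      rw [removeHook_rect hj1 hj2] at hno
      exact hno ⟨1, n + 1 - l, hm, ha⟩
    · right
      rw [removeHook_rect hj1 hj2] at hmem heq ⊢
      obtain ⟨rfl, rfl, htr⟩ := trig_unique hl hj1 hj2 hmem heq
      refine ⟨htr, ?_⟩
      rw [removeHook_rect (by omega) (by omega)]
      congr 1
      omega
  · rintro ⟨j, hj1, hj2, ⟨htr, rfl⟩ | ⟨htr, rfl⟩⟩
    · refine ⟨1, j, mem_rect_one.mpr ⟨rfl, hj1, hj2⟩, Or.inl ⟨(removeHook_rect hj1 hj2).symm, ?_⟩⟩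
      rintro ⟨i', j', hmem, heq⟩
      rw [removeHook_rect hj1 hj2] at hmem heq
      exact htr (trig_unique hl hj1 hj2 hmem heq).2.2
    · obtain ⟨hm, ha⟩ := trig_mem hl hj1 hj2 htr
      refine ⟨1, j, mem_rect_one.mpr ⟨rfl, hj1, hj2⟩,
        Or.inr ⟨1, n + 1 - l, ?_, ?_, ?_⟩⟩
      · rw [removeHook_rect hj1 hj2]; exact hm
      · rw [removeHook_rect hj1 hj2]; exact ha
      · rw [removeHook_rect hj1 hj2, removeHook_rect (by omega) (by omega)]
        congr 1
        omega
def gv (n l : ℕ) : ℕ := if n % 2 = 0 ∧ n < 2 * l then l - 1 else l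

lemma grundy_rect (n : ℕ) : ∀ l, l ≤ n → grundy 1 n (rect 1 l) = gv n l := by
  intro l
  induction l using Nat.strong_induction_on with
  | _ l IH =>
  intro hl
  have hset : {g : ℕ | ∃ Y', ∃ _ : Move 1 n (rect 1 l) Y', grundy 1 n Y' = g}
      = Set.Iio (gv n l) := by
    ext g
    simp only [Set.mem_setOf_eq, Set.mem_Iio]
    constructor
    · rintro ⟨Y', hmv, rfl⟩
      rw [move_iff hl] at hmv
      obtain ⟨j, hj1, hj2, hc⟩ := hmv
      rcases hc with ⟨htr, rfl⟩ | ⟨htr, rfl⟩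
      · rw [IH (j - 1) (by omega) (by omega)]
        unfold gv
        split_ifs <;> omega
      · rw [IH (n - l) (by omega) (by omega)]
        unfold gv
        split_ifs <;> omega
    · intro hg
      by_cases hcase : n % 2 = 0 ∧ n < 2 * l
      · have hgl : g < l - 1 := by unfold gv at hg; rw [if_pos hcase] at hg; exact hg
        by_cases hg2 : 2 * g < n
        · refine ⟨rect 1 g, (move_iff hl _).mpr
            ⟨g + 1, by omega, by omega, Or.inl ⟨by omega, by rw [Nat.add_sub_cancel]⟩⟩, ?_⟩
          rw [IH g (by omega) (by omega)]
          unfold gv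
          split_ifs <;> omega
        · refine ⟨rect 1 (g + 1), (move_iff hl _).mpr
            ⟨g + 2, by omega, by omega, Or.inl ⟨by omega, by rw [show g + 2 - 1 = g + 1 by omega]⟩⟩, ?_⟩
          rw [IH (g + 1) (by omega) (by omega)]
          unfold gv
          split_ifs <;> omega
      · have hgl : g < l := by unfold gv at hg; rw [if_neg hcase] at hg; exact hg
        refine ⟨rect 1 g, (move_iff hl _).mpr
          ⟨g + 1, by omega, by omega, Or.inl ⟨by omega, by rw [Nat.add_sub_cancel]⟩⟩, ?_⟩
        rw [IH g (by omega) (by omega)]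
        unfold gv
        split_ifs <;> omega
  rw [grundy, hset, mex_Iio]
lemma rect_one_zero : rect 1 0 = ∅ := by
  ext p
  simp [mem_rect_one]
  omega

lemma YD_iff {n : ℕ} (Y : Finset (ℕ × ℕ)) :
    (IsYD Y ∧ Y ⊆ rect 1 n) ↔ ∃ k, k ≤ n ∧ Y = rect 1 k := by
  constructor
  · rintro ⟨⟨hpos, hdc⟩, hsub⟩
    by_cases hY : Y.Nonempty
    · have hne : (Y.image Prod.snd).Nonempty := hY.image _
      set m := (Y.image Prod.snd).max' hne with hm
      obtain ⟨q, hqY, hq2⟩ := Finset.mem_image.mp ((Y.image Prod.snd).max'_mem hne)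
      refine ⟨m, ?_, ?_⟩
      · have := mem_rect_one.mp (hsub hqY)
        omega
      · ext p
        rw [mem_rect_one]
        constructor
        · intro hp
          obtain ⟨h1, h2, h3⟩ := mem_rect_one.mp (hsub hp)
          exact ⟨h1, h2, Finset.le_max' _ _ (Finset.mem_image_of_mem _ hp)⟩
        · rintro ⟨h1, h2, h3⟩
          have hq1 : q.1 = 1 := (mem_rect_one.mp (hsub hqY)).1
          have := hdc q hqY (p.1, p.2) (by omega) h2 (by omega) (by omega)
          simpa using this
    · refine ⟨0, Nat.zero_le _, ?_⟩
      rw [rect_one_zero, ← Finset.not_nonempty_iff_eq_empty]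
      exact hY
  · rintro ⟨k, hk, rfl⟩
    refine ⟨⟨?_, ?_⟩, ?_⟩
    · intro p hp
      obtain ⟨h1, h2, h3⟩ := mem_rect_one.mp hp
      omega
    · intro p hp q hq1 hq2 hq3 hq4
      obtain ⟨h1, h2, h3⟩ := mem_rect_one.mp hp
      exact mem_rect_one.mpr ⟨by omega, hq2, by omega⟩
    · intro p hp
      obtain ⟨h1, h2, h3⟩ := mem_rect_one.mp hp
      exact mem_rect_one.mpr ⟨h1, h2, by omega⟩

lemma reach_iff {n : ℕ} (hn : 1 ≤ n) (Y : Finset (ℕ × ℕ)) :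
    Reach 1 n Y ↔ ∃ k, k ≤ n ∧ Y = rect 1 k ∧ (n % 2 = 0 → 2 * k ≠ n) := by
  constructor
  · intro h
    induction h with
    | refl => exact ⟨n, le_rfl, rfl, by omega⟩
    | tail hr hmv IH =>
      obtain ⟨k, hk, rfl, hpar⟩ := IH
      rw [move_iff hk] at hmv
      obtain ⟨j, hj1, hj2, ⟨htr, rfl⟩ | ⟨htr, rfl⟩⟩ := hmv
      · exact ⟨j - 1, by omega, rfl, by omega⟩
      · exact ⟨n - k, by omega, rfl, by omega⟩
  · rintro ⟨k, hk, rfl, hpar⟩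
    rcases eq_or_lt_of_le hk with rfl | hlt
    · exact Relation.ReflTransGen.refl
    · refine Relation.ReflTransGen.single ((move_iff le_rfl _).mpr
        ⟨k + 1, by omega, by omega, Or.inl ⟨by omega, by rw [Nat.add_sub_cancel]⟩⟩)
theorem stmt11 (n : ℕ) (hn : 1 ≤ n) :
    (Odd n → {Y : Finset (ℕ × ℕ) | Reach 1 n Y} = {Y | IsYD Y ∧ Y ⊆ rect 1 n}) ∧
    (Even n → {Y : Finset (ℕ × ℕ) | Reach 1 n Y} =
        {Y | IsYD Y ∧ Y ⊆ rect 1 n} \ {rect 1 (n / 2)}) ∧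
    (∀ l : ℕ, l ≤ n → Reach 1 n (rect 1 l) →
      (Odd n → grundy 1 n (rect 1 l) = l) ∧
      (Even n → l < n / 2 → grundy 1 n (rect 1 l) = l) ∧
      (Even n → n / 2 < l → grundy 1 n (rect 1 l) = l - 1)) ∧
    (Odd n → grundy 1 n (rect 1 n) = n) ∧
    (Even n → grundy 1 n (rect 1 n) = n - 1) := by
  refine ⟨?_, ?_, ?_, ?_, ?_⟩
  · intro hodd
    rw [Nat.odd_iff] at hodd
    ext Y
    simp only [Set.mem_setOf_eq, reach_iff hn, YD_iff]
    constructor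
    · rintro ⟨k, hk, rfl, -⟩; exact ⟨k, hk, rfl⟩
    · rintro ⟨k, hk, rfl⟩; exact ⟨k, hk, rfl, by omega⟩
  · intro heven
    rw [Nat.even_iff] at heven
    ext Y
    simp only [Set.mem_setOf_eq, reach_iff hn, Set.mem_diff, YD_iff, Set.mem_singleton_iff]
    constructor
    · rintro ⟨k, hk, rfl, hpar⟩
      refine ⟨⟨k, hk, rfl⟩, ?_⟩
      intro h
      have := rect_one_inj h
      omega
    · rintro ⟨⟨k, hk, rfl⟩, hne⟩
      refine ⟨k, hk, rfl, ?_⟩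
      intro _ h2
      exact hne (by rw [show k = n / 2 by omega])
  · intro l hl _
    rw [grundy_rect n l hl]
    refine ⟨?_, ?_, ?_⟩
    · intro hodd
      rw [Nat.odd_iff] at hodd
      rw [gv, if_neg (by omega)]
    · intro heven hllt
      rw [Nat.even_iff] at heven
      rw [gv, if_neg (by omega)]
    · intro heven hllt
      rw [Nat.even_iff] at heven
      rw [gv, if_pos (by omega)]
  · intro hodd
    rw [Nat.odd_iff] at hodd
    rw [grundy_rect n n le_rfl, gv, if_neg (by omega)]
  · intro heven
    rw [Nat.even_iff] at heven
    rw [grundy_rect n n le_rfl, gv, if_pos (by omega)]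
end

section
/- Let n = 2n' be even, let Y = (λ₁,λ₂) be a Young diagram contained in Y_{2,2n'}, let (i,j) ∈ Y, and set Y' = (λ₁',λ₂') = Y∖h_Y(i,j). Then λ₁' + λ₂' = 2n' if and only if there exists a box (i',j') ∈ Y' such that A(h_{Y'}(i',j')) = A(h_Y(i,j)) as multisets. In this case, Y'' := Y'∖h_{Y'}(i',j') equals (2n'−λ₂, 2n'−λ₁). -/
open Finset

-- membership
lemma mem_tworow {a b x y : ℕ} :
    (x, y) ∈ tworow a b ↔ (x = 1 ∧ 1 ≤ y ∧ y ≤ a) ∨ (x = 2 ∧ 1 ≤ y ∧ y ≤ b) := by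
  simp only [tworow, Finset.mem_union, Finset.mem_product, Finset.mem_singleton,
    Finset.mem_Icc]

lemma tworow_inj {a b a' b' : ℕ} (h : tworow a b = tworow a' b') : a = a' ∧ b = b' := by
  have h1 := fun t => Finset.ext_iff.1 h (1, t)
  have h2 := fun t => Finset.ext_iff.1 h (2, t)
  simp only [mem_tworow] at h1 h2
  have ha := h1 a; have ha' := h1 a'
  have hb := h2 b; have hb' := h2 b'
  have e12 : (1:ℕ) ≠ 2 := by omega
  have e21 : (2:ℕ) ≠ 1 := by omega
  simp only [true_and, e12, e21, false_and, false_or, or_false] at ha ha' hb hb'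
  omega

-- hook descriptions
lemma hook_row2 {a b j : ℕ} (hj : 1 ≤ j) :
    hook (tworow a b) 2 j = ({2} : Finset ℕ) ×ˢ Finset.Icc j b := by
  ext ⟨x, y⟩
  simp only [hook, Finset.mem_filter, mem_tworow, Finset.mem_product,
    Finset.mem_singleton, Finset.mem_Icc]
  omega

lemma hook_row1_out {a b j : ℕ} (hj : b < j) :
    hook (tworow a b) 1 j = ({1} : Finset ℕ) ×ˢ Finset.Icc j a := by
  ext ⟨x, y⟩
  simp only [hook, Finset.mem_filter, mem_tworow, Finset.mem_product,
    Finset.mem_singleton, Finset.mem_Icc]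
  omega

lemma hook_row1_in {a b j : ℕ} (hj : 1 ≤ j) (hjb : j ≤ b) (hba : b ≤ a) :
    hook (tworow a b) 1 j = (({1} : Finset ℕ) ×ˢ Finset.Icc j a) ∪ {(2, j)} := by
  ext ⟨x, y⟩
  simp only [hook, Finset.mem_filter, mem_tworow, Finset.mem_product, Finset.mem_union,
    Finset.mem_singleton, Finset.mem_Icc, Prod.mk.injEq]
  omega

def hfun (N d : ℕ) : ℤ := min (d : ℤ) ((N : ℤ) + 2 - (d : ℤ))

def Jm (N u v : ℕ) : Multiset ℤ := (Finset.Icc u v).val.map (hfun N)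

lemma Amul_prod_row1 (N a j : ℕ) :
    Amul 2 N (({1} : Finset ℕ) ×ˢ Finset.Icc j a) = Jm N (j + 1) (a + 1) := by
  rw [Finset.singleton_product]
  unfold Amul Jm
  rw [← Finset.map_add_right_Icc j a 1, Finset.map_val, Finset.map_val,
    Multiset.map_map, Multiset.map_map]
  refine Multiset.map_congr rfl fun t ht => ?_
  show unimodal 2 N (1, t) = hfun N (t + 1)
  unfold unimodal hfun
  push_cast
  omega

lemma Amul_prod_row2 (N b j : ℕ) :
    Amul 2 N (({2} : Finset ℕ) ×ˢ Finset.Icc j b) = Jm N j b := by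
  rw [Finset.singleton_product]
  unfold Amul Jm
  rw [Finset.map_val, Multiset.map_map]
  refine Multiset.map_congr rfl fun t ht => ?_
  show unimodal 2 N (2, t) = hfun N t
  unfold unimodal hfun
  push_cast
  omega

lemma Icc_eq_insert (u v : ℕ) (h : u ≤ v) :
    Finset.Icc u v = insert u (Finset.Icc (u + 1) v) := by
  ext x
  simp only [Finset.mem_Icc, Finset.mem_insert]
  omega

lemma Jm_cons (N u v : ℕ) (h : u ≤ v) : Jm N u v = hfun N u ::ₘ Jm N (u + 1) v := by
  unfold Jm
  rw [Icc_eq_insert u v h, Finset.insert_val_of_notMem (by simp), Multiset.map_cons]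

lemma image_sub_Icc (c u v : ℕ) (huv : u ≤ v) (hv : v ≤ c) :
    (Finset.Icc u v).image (fun t => c - t) = Finset.Icc (c - v) (c - u) := by
  ext x
  simp only [Finset.mem_image, Finset.mem_Icc]
  constructor
  · rintro ⟨t, ht, rfl⟩; omega
  · intro hx; exact ⟨c - x, by omega, by omega⟩

lemma Jm_refl (N u v : ℕ) (hu : 1 ≤ u) (huv : u ≤ v) (hv : v ≤ N + 1) :
    Jm N u v = Jm N (N + 2 - v) (N + 2 - u) := by
  unfold Jm
  have hinj : Set.InjOn (fun t => N + 2 - t) ↑(Finset.Icc u v) := by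
    intro x hx y hy hxy
    have h2 : N + 2 - x = N + 2 - y := hxy
    simp only [Finset.coe_Icc, Set.mem_Icc] at hx hy
    omega
  rw [← image_sub_Icc (N + 2) u v (by omega) (by omega),
    Finset.image_val_of_injOn hinj, Multiset.map_map]
  refine Multiset.map_congr rfl fun t ht => ?_
  rw [← Finset.mem_def, Finset.mem_Icc] at ht
  show hfun N t = hfun N (N + 2 - t)
  unfold hfun
  have hc : ((N + 2 - t : ℕ) : ℤ) = (N : ℤ) + 2 - t := by omega
  rw [hc]; omega

lemma Jm_card (N u v : ℕ) : Multiset.card (Jm N u v) = v + 1 - u := by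
  unfold Jm
  rw [Multiset.card_map, ← Finset.card_def, Nat.card_Icc]

lemma Jm_lb (N u v : ℕ) (hv : v ≤ N + 1) :
    ∀ x ∈ Jm N u v, min (u : ℤ) ((N : ℤ) + 2 - v) ≤ x := by
  intro x hx
  obtain ⟨t, ht, rfl⟩ := Multiset.mem_map.1 hx
  rw [← Finset.mem_def, Finset.mem_Icc] at ht
  unfold hfun
  omega

lemma Jm_min_mem (N u v : ℕ) (huv : u ≤ v) (hv : v ≤ N + 1) :
    min (u : ℤ) ((N : ℤ) + 2 - v) ∈ Jm N u v := by
  by_cases h : u + v ≤ N + 2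
  · refine Multiset.mem_map.2 ⟨u, ?_, ?_⟩
    · rw [← Finset.mem_def, Finset.mem_Icc]; omega
    · unfold hfun; omega
  · refine Multiset.mem_map.2 ⟨v, ?_, ?_⟩
    · rw [← Finset.mem_def, Finset.mem_Icc]; omega
    · unfold hfun; omega

lemma Jm_eq_iff {N u v u' v' : ℕ} (hu : 1 ≤ u) (huv : u ≤ v) (hv : v ≤ N + 1)
    (hu' : 1 ≤ u') (huv' : u' ≤ v') (hv' : v' ≤ N + 1) :
    Jm N u v = Jm N u' v' ↔ ((u = u' ∧ v = v') ∨ (u' = N + 2 - v ∧ v' = N + 2 - u)) := by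
  constructor
  · intro he
    have hc : v + 1 - u = v' + 1 - u' := by
      have := congrArg Multiset.card he
      rwa [Jm_card, Jm_card] at this
    have h1 : min (u : ℤ) ((N : ℤ) + 2 - v) ≤ min (u' : ℤ) ((N : ℤ) + 2 - v') :=
      Jm_lb N u v hv _ (he ▸ Jm_min_mem N u' v' huv' hv')
    have h2 : min (u' : ℤ) ((N : ℤ) + 2 - v') ≤ min (u : ℤ) ((N : ℤ) + 2 - v) :=
      Jm_lb N u' v' hv' _ (he ▸ Jm_min_mem N u v huv hv)
    omega
  · rintro (⟨rfl, rfl⟩ | ⟨rfl, rfl⟩)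
    · rfl
    · exact Jm_refl N u v hu huv hv

lemma mem_tworow' {a b : ℕ} {p : ℕ × ℕ} :
    p ∈ tworow a b ↔ (p.1 = 1 ∧ 1 ≤ p.2 ∧ p.2 ≤ a) ∨ (p.1 = 2 ∧ 1 ≤ p.2 ∧ p.2 ≤ b) := by
  obtain ⟨x, y⟩ := p; exact mem_tworow

lemma unimodal_two (N t : ℕ) : unimodal 2 N (2, t) = hfun N t := by
  unfold unimodal hfun; push_cast; omega

lemma Amul_hook_row2 (N a b j : ℕ) (hj : 1 ≤ j) :
    Amul 2 N (hook (tworow a b) 2 j) = Jm N j b := by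
  rw [hook_row2 hj, Amul_prod_row2]

lemma Amul_hook_row1_out (N a b j : ℕ) (hj : b < j) :
    Amul 2 N (hook (tworow a b) 1 j) = Jm N (j + 1) (a + 1) := by
  rw [hook_row1_out hj, Amul_prod_row1]

lemma Amul_hook_row1_in (N a b j : ℕ) (hj : 1 ≤ j) (hjb : j ≤ b) (hba : b ≤ a) :
    Amul 2 N (hook (tworow a b) 1 j) = Jm N j (a + 1) := by
  rw [hook_row1_in hj hjb hba]
  have hnm : (2, j) ∉ ({1} : Finset ℕ) ×ˢ Finset.Icc j a := by
    simp
  rw [Finset.union_comm, ← Finset.insert_eq]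
  unfold Amul
  rw [Finset.insert_val_of_notMem hnm, Multiset.map_cons, unimodal_two]
  have := Amul_prod_row1 N a j
  unfold Amul at this
  rw [this, Jm_cons N j (a + 1) (by omega)]

lemma removeHook_row2 (a b j : ℕ) (hj : 1 ≤ j) (hjb : j ≤ b) (hba : b ≤ a) :
    removeHook (tworow a b) 2 j = tworow a (j - 1) := by
  unfold removeHook
  have hid : ∀ p ∈ tworow a b \ hook (tworow a b) 2 j, shiftBox 2 j p = p := by
    intro p hp
    rw [Finset.mem_sdiff] at hp
    have := mem_tworow'.1 hp.1
    unfold shiftBox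
    rw [if_neg (by omega)]
  rw [Finset.image_congr (g := id) (fun p hp => hid p (by simpa using hp)), Finset.image_id]
  ext p
  simp only [Finset.mem_sdiff, mem_tworow', hook, Finset.mem_filter]
  omega

lemma removeHook_row1_out (a b j : ℕ) (hj : b < j) (hja : j ≤ a) :
    removeHook (tworow a b) 1 j = tworow (j - 1) b := by
  unfold removeHook
  have hid : ∀ p ∈ tworow a b \ hook (tworow a b) 1 j, shiftBox 1 j p = p := by
    intro p hp
    rw [Finset.mem_sdiff, mem_tworow'] at hp
    have h2 := hp.2
    rw [hook, Finset.mem_filter, mem_tworow'] at h2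
    unfold shiftBox
    rw [if_neg (by omega)]
  rw [Finset.image_congr (g := id) (fun p hp => hid p (by simpa using hp)), Finset.image_id]
  ext p
  simp only [Finset.mem_sdiff, mem_tworow', hook, Finset.mem_filter]
  omega

lemma removeHook_row1_in (a b j : ℕ) (hj : 1 ≤ j) (hjb : j ≤ b) (hba : b ≤ a) :
    removeHook (tworow a b) 1 j = tworow (b - 1) (j - 1) := by
  unfold removeHook
  ext q
  simp only [Finset.mem_image, Finset.mem_sdiff, mem_tworow', hook, Finset.mem_filter]
  constructor
  · rintro ⟨p, ⟨hm, hh⟩, rfl⟩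
    unfold shiftBox
    split_ifs with hc
    · dsimp only
      omega
    · omega
  · rintro (⟨h1, hy1, hy2⟩ | ⟨h2, hy1, hy2⟩)
    · by_cases hcase : q.2 ≤ j - 1
      · refine ⟨(1, q.2), ⟨?_, ?_⟩, ?_⟩
        · dsimp only; omega
        · dsimp only; omega
        · unfold shiftBox; rw [if_neg (by simp)]
          exact Prod.ext h1.symm rfl
      · refine ⟨(2, q.2 + 1), ⟨?_, ?_⟩, ?_⟩
        · dsimp only; omega
        · dsimp only; omega
        · unfold shiftBox; rw [if_pos (by constructor <;> simp <;> omega)]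
          exact Prod.ext h1.symm rfl
    · refine ⟨(2, q.2), ⟨?_, ?_⟩, ?_⟩
      · dsimp only; omega
      · dsimp only; omega
      · unfold shiftBox; rw [if_neg (by simp; omega)]
        exact Prod.ext h2.symm rfl


lemma Amul_hook_cases (N A B : ℕ) (i' j' : ℕ) (hBA : B ≤ A)
    (h : (i', j') ∈ tworow A B) :
    (i' = 1 ∧ B < j' ∧ j' ≤ A ∧
      Amul 2 N (hook (tworow A B) i' j') = Jm N (j' + 1) (A + 1)) ∨
    (i' = 1 ∧ 1 ≤ j' ∧ j' ≤ B ∧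
      Amul 2 N (hook (tworow A B) i' j') = Jm N j' (A + 1)) ∨
    (i' = 2 ∧ 1 ≤ j' ∧ j' ≤ B ∧
      Amul 2 N (hook (tworow A B) i' j') = Jm N j' B) := by
  rcases mem_tworow.1 h with ⟨hi, hb, ha⟩ | ⟨hi, hb, ha⟩
  · subst hi
    by_cases hc : j' ≤ B
    · exact Or.inr (Or.inl ⟨rfl, hb, hc, Amul_hook_row1_in N A B j' hb hc hBA⟩)
    · exact Or.inl ⟨rfl, by omega, ha, Amul_hook_row1_out N A B j' (by omega)⟩
  · subst hi
    exact Or.inr (Or.inr ⟨rfl, hb, ha, Amul_hook_row2 N A B j' hb⟩)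

theorem stmt12 (n' : ℕ) (hn' : 1 ≤ n') (l1 l2 : ℕ) (h21 : l2 ≤ l1) (h1 : l1 ≤ 2 * n')
    (i j : ℕ) (hij : (i, j) ∈ tworow l1 l2)
    (l1' l2' : ℕ) (h21' : l2' ≤ l1')
    (hY' : removeHook (tworow l1 l2) i j = tworow l1' l2') :
    ((l1' + l2' = 2 * n') ↔
      ∃ i' j' : ℕ, (i', j') ∈ tworow l1' l2' ∧
        Amul 2 (2 * n') (hook (tworow l1' l2') i' j') =
          Amul 2 (2 * n') (hook (tworow l1 l2) i j)) ∧
    (∀ i' j' : ℕ, (i', j') ∈ tworow l1' l2' →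
      Amul 2 (2 * n') (hook (tworow l1' l2') i' j') =
        Amul 2 (2 * n') (hook (tworow l1 l2) i j) →
      removeHook (tworow l1' l2') i' j' = tworow (2 * n' - l2) (2 * n' - l1)) := by
  rcases mem_tworow.1 hij with ⟨hi, hj1, hja⟩ | ⟨hi, hj1, hjb⟩
  case inr =>
    -- i = 2, 1 ≤ j ≤ l2 : Y' = (l1, j-1)
    subst hi
    rw [removeHook_row2 l1 l2 j hj1 hjb h21] at hY'
    obtain ⟨e1, e2⟩ := tworow_inj hY'
    subst e1; subst e2
    have hAH : Amul 2 (2 * n') (hook (tworow l1 l2) 2 j) = Jm (2 * n') j l2 :=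
      Amul_hook_row2 (2 * n') l1 l2 j hj1
    have hmain : ∀ i' j' : ℕ, (i', j') ∈ tworow l1 (j - 1) →
        Amul 2 (2 * n') (hook (tworow l1 (j - 1)) i' j') = Jm (2 * n') j l2 →
        (l1 + (j - 1) = 2 * n' ∧
          removeHook (tworow l1 (j - 1)) i' j' = tworow (2 * n' - l2) (2 * n' - l1)) := by
      intro i' j' hm hA
      rcases Amul_hook_cases (2 * n') l1 (j - 1) i' j' (by omega) hm with
        ⟨hi', hb', ha', hAe⟩ | ⟨hi', hb', ha', hAe⟩ | ⟨hi', hb', ha', hAe⟩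
      · rw [hAe] at hA
        have hd := (Jm_eq_iff (by omega) (by omega) (by omega) (by omega) (by omega)
          (by omega)).mp hA
        refine ⟨by omega, ?_⟩
        rw [hi', removeHook_row1_out l1 (j - 1) j' (by omega) ha',
          show j' - 1 = 2 * n' - l2 by omega, show j - 1 = 2 * n' - l1 by omega]
      · rw [hAe] at hA
        have hd := (Jm_eq_iff (by omega) (by omega) (by omega) (by omega) (by omega)
          (by omega)).mp hA
        exfalso; omega
      · rw [hAe] at hA
        have hd := (Jm_eq_iff (by omega) (by omega) (by omega) (by omega) (by omega)
          (by omega)).mp hA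
        exfalso; omega
    constructor
    · constructor
      · intro hsum
        refine ⟨1, 2 * n' + 1 - l2, mem_tworow.2 (Or.inl ⟨rfl, by omega, by omega⟩), ?_⟩
        rw [Amul_hook_row1_out (2 * n') l1 (j - 1) (2 * n' + 1 - l2) (by omega), hAH,
          show 2 * n' + 1 - l2 + 1 = 2 * n' + 2 - l2 by omega]
        exact (Jm_eq_iff (by omega) (by omega) (by omega) (by omega) (by omega)
          (by omega)).mpr (Or.inr ⟨by omega, by omega⟩)
      · rintro ⟨i', j', hm, hA⟩
        rw [hAH] at hA
        exact (hmain i' j' hm hA).1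
    · intro i' j' hm hA
      rw [hAH] at hA
      exact (hmain i' j' hm hA).2
  case inl =>
    subst hi
    by_cases hjc : j ≤ l2
    · -- i = 1, 1 ≤ j ≤ l2 : Y' = (l2-1, j-1)
      rw [removeHook_row1_in l1 l2 j hj1 hjc h21] at hY'
      obtain ⟨e1, e2⟩ := tworow_inj hY'
      subst e1; subst e2
      have hAH : Amul 2 (2 * n') (hook (tworow l1 l2) 1 j) = Jm (2 * n') j (l1 + 1) :=
        Amul_hook_row1_in (2 * n') l1 l2 j hj1 hjc h21
      have hmain : ∀ i' j' : ℕ, (i', j') ∈ tworow (l2 - 1) (j - 1) →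
          Amul 2 (2 * n') (hook (tworow (l2 - 1) (j - 1)) i' j') = Jm (2 * n') j (l1 + 1) →
          ((l2 - 1) + (j - 1) = 2 * n' ∧
            removeHook (tworow (l2 - 1) (j - 1)) i' j' =
              tworow (2 * n' - l2) (2 * n' - l1)) := by
        intro i' j' hm hA
        rcases Amul_hook_cases (2 * n') (l2 - 1) (j - 1) i' j' (by omega) hm with
          ⟨hi', hb', ha', hAe⟩ | ⟨hi', hb', ha', hAe⟩ | ⟨hi', hb', ha', hAe⟩
        · rw [show l2 - 1 + 1 = l2 by omega] at hAe
          rw [hAe] at hA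
          have hd := (Jm_eq_iff (by omega) (by omega) (by omega) (by omega) (by omega)
            (by omega)).mp hA
          exfalso; omega
        · rw [show l2 - 1 + 1 = l2 by omega] at hAe
          rw [hAe] at hA
          have hd := (Jm_eq_iff (by omega) (by omega) (by omega) (by omega) (by omega)
            (by omega)).mp hA
          refine ⟨by omega, ?_⟩
          rw [hi', removeHook_row1_in (l2 - 1) (j - 1) j' hb' ha' (by omega),
            show j - 1 - 1 = 2 * n' - l2 by omega, show j' - 1 = 2 * n' - l1 by omega]
        · rw [hAe] at hA
          have hd := (Jm_eq_iff (by omega) (by omega) (by omega) (by omega) (by omega)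
            (by omega)).mp hA
          exfalso; omega
      constructor
      · constructor
        · intro hsum
          refine ⟨1, 2 * n' + 1 - l1,
            mem_tworow.2 (Or.inl ⟨rfl, by omega, by omega⟩), ?_⟩
          rw [Amul_hook_row1_in (2 * n') (l2 - 1) (j - 1) (2 * n' + 1 - l1) (by omega)
            (by omega) (by omega), hAH, show l2 - 1 + 1 = l2 by omega]
          exact (Jm_eq_iff (by omega) (by omega) (by omega) (by omega) (by omega)
            (by omega)).mpr (Or.inr ⟨by omega, by omega⟩)
        · rintro ⟨i', j', hm, hA⟩
          rw [hAH] at hA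
          exact (hmain i' j' hm hA).1
      · intro i' j' hm hA
        rw [hAH] at hA
        exact (hmain i' j' hm hA).2
    · -- i = 1, l2 < j ≤ l1 : Y' = (j-1, l2)
      rw [removeHook_row1_out l1 l2 j (by omega) hja] at hY'
      obtain ⟨e1, e2⟩ := tworow_inj hY'
      subst e1; subst e2
      have hAH : Amul 2 (2 * n') (hook (tworow l1 l2) 1 j) = Jm (2 * n') (j + 1) (l1 + 1) :=
        Amul_hook_row1_out (2 * n') l1 l2 j (by omega)
      have hmain : ∀ i' j' : ℕ, (i', j') ∈ tworow (j - 1) l2 →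
          Amul 2 (2 * n') (hook (tworow (j - 1) l2) i' j') = Jm (2 * n') (j + 1) (l1 + 1) →
          ((j - 1) + l2 = 2 * n' ∧
            removeHook (tworow (j - 1) l2) i' j' =
              tworow (2 * n' - l2) (2 * n' - l1)) := by
        intro i' j' hm hA
        rcases Amul_hook_cases (2 * n') (j - 1) l2 i' j' (by omega) hm with
          ⟨hi', hb', ha', hAe⟩ | ⟨hi', hb', ha', hAe⟩ | ⟨hi', hb', ha', hAe⟩
        · rw [show j - 1 + 1 = j by omega] at hAe
          rw [hAe] at hA
          have hd := (Jm_eq_iff (by omega) (by omega) (by omega) (by omega) (by omega)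
            (by omega)).mp hA
          exfalso; omega
        · rw [show j - 1 + 1 = j by omega] at hAe
          rw [hAe] at hA
          have hd := (Jm_eq_iff (by omega) (by omega) (by omega) (by omega) (by omega)
            (by omega)).mp hA
          exfalso; omega
        · rw [hAe] at hA
          have hd := (Jm_eq_iff (by omega) (by omega) (by omega) (by omega) (by omega)
            (by omega)).mp hA
          refine ⟨by omega, ?_⟩
          rw [hi', removeHook_row2 (j - 1) l2 j' hb' ha' (by omega),
            show j - 1 = 2 * n' - l2 by omega, show j' - 1 = 2 * n' - l1 by omega]
      constructor
      · constructor
        · intro hsum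
          refine ⟨2, 2 * n' + 1 - l1,
            mem_tworow.2 (Or.inr ⟨rfl, by omega, by omega⟩), ?_⟩
          rw [Amul_hook_row2 (2 * n') (j - 1) l2 (2 * n' + 1 - l1) (by omega), hAH]
          exact (Jm_eq_iff (by omega) (by omega) (by omega) (by omega) (by omega)
            (by omega)).mpr (Or.inr ⟨by omega, by omega⟩)
        · rintro ⟨i', j', hm, hA⟩
          rw [hAH] at hA
          exact (hmain i' j' hm hA).1
      · intro i' j' hm hA
        rw [hAH] at hA
        exact (hmain i' j' hm hA).2
end
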